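/- There exists a constant c > 0 depending only on M such that for every real κ ≥ 2 and every smooth M-periodic zero-mean function u with Fourier coefficients (u_k)_{k ∈ Z_L}: writing u^< := ∑_{0<|k|<κ} u_k e^{i k·x} and u^> := ∑_{|k|≥κ} u_k e^{i k·x}, one has ‖u‖_{L^∞} ≤ c·‖∇u^<‖_{L²}·(1 + log κ)^{1/2} + c·‖Δu^>‖_{L²}/κ. -/

import Mathlib

noncomputable section

open scoped Real

/-- The physical wavenumber in the dual lattice `Z_L` attached to the integer index `n`. -/
def wn (L₁ L₂ : ℝ) (n : ℤ × ℤ) : ℝ × ℝ :=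
  (2 * Real.pi * (n.1 : ℝ) / L₁, 2 * Real.pi * (n.2 : ℝ) / L₂)

/-- `|k|²` for a wavenumber `k ∈ ℝ²`. -/
def ksq (k : ℝ × ℝ) : ℝ := k.1 ^ 2 + k.2 ^ 2

/-- The wedge product `j ∧ k = j₁k₂ − j₂k₁`. -/
def wedge (j k : ℝ × ℝ) : ℝ := j.1 * k.2 - j.2 * k.1

/-- Squared `Hˢ` norm `‖(−Δ)^{s/2} w‖²_{L²}` of a zero-mean field on the torus
`M = [0,L₁] × [−L₂/2,L₂/2]`, computed from its Fourier coefficients `c` via Parseval. -/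
def hsq (L₁ L₂ : ℝ) (s : ℝ) (c : ℤ × ℤ → ℂ) : ℝ :=
  (L₁ * L₂) * ∑' n : ℤ × ℤ, ksq (wn L₁ L₂ n) ^ s * ‖c n‖ ^ 2

/-- The `L²(M)` inner product `(a,b)_{L²} = ∫_M a conj(b)`, via Fourier coefficients. -/
def ip (L₁ L₂ : ℝ) (a b : ℤ × ℤ → ℂ) : ℂ :=
  ((L₁ * L₂ : ℝ) : ℂ) * ∑' n : ℤ × ℤ, a n * (starRingEnd ℂ) (b n)

/-- Interaction coefficient `(j∧k)/|j|²` of the nonlinearity `B`. -/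
def bcoef (L₁ L₂ : ℝ) (j k : ℤ × ℤ) : ℝ :=
  if j = 0 then 0 else wedge (wn L₁ L₂ j) (wn L₁ L₂ k) / ksq (wn L₁ L₂ j)

/-- Fourier coefficients of `B(a,b) := (∇⊥Δ⁻¹a)·∇b` (a convolution). -/
def bconv (L₁ L₂ : ℝ) (a b : ℤ × ℤ → ℂ) (l : ℤ × ℤ) : ℂ :=
  ∑' p : ℤ × ℤ, ((bcoef L₁ L₂ p (l - p) : ℝ) : ℂ) * a p * b (l - p)

/-- `Ω_k := −k₁/|k|²`, i times the eigenvalue of `L = ∂ₓΔ⁻¹` at wavenumber `k`. -/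
def Om (L₁ L₂ : ℝ) (n : ℤ × ℤ) : ℝ := -(wn L₁ L₂ n).1 / ksq (wn L₁ L₂ n)

/-- Rapid decay of Fourier coefficients: the field is smooth on the torus. -/
def regular (L₁ L₂ : ℝ) (c : ℤ × ℤ → ℂ) : Prop :=
  ∀ s : ℝ, Summable fun n : ℤ × ℤ => (1 + ksq (wn L₁ L₂ n)) ^ s * ‖c n‖ ^ 2

/-- The Fourier coefficients of a real-valued field. -/
def realField (c : ℤ × ℤ → ℂ) : Prop := ∀ n, c (-n) = (starRingEnd ℂ) (c n)

/-- Non-zonal (fast) part: Fourier modes with `k₁ ≠ 0`. -/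
def tilde (c : ℤ × ℤ → ℂ) : ℤ × ℤ → ℂ := fun n => if n.1 = 0 then 0 else c n

/-- Zonal (slow) part: Fourier modes with `k₁ = 0`. -/
def zbar (c : ℤ × ℤ → ℂ) : ℤ × ℤ → ℂ := fun n => if n.1 = 0 then c n else 0

/-- The Poincaré constant `c₀` of the torus (the smallest nonzero wavenumber). -/
def poin (L₁ L₂ : ℝ) : ℝ := min (2 * Real.pi / L₁) (2 * Real.pi / L₂)

/-- The coefficients of `∂ₓ c`. -/
def dx (L₁ L₂ : ℝ) (c : ℤ × ℤ → ℂ) : ℤ × ℤ → ℂ :=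
  fun n => Complex.I * (((wn L₁ L₂ n).1 : ℝ) : ℂ) * c n

/-- The coefficients of `∂_y c`. -/
def dy (L₁ L₂ : ℝ) (c : ℤ × ℤ → ℂ) : ℤ × ℤ → ℂ :=
  fun n => Complex.I * (((wn L₁ L₂ n).2 : ℝ) : ℂ) * c n

/-- The coefficients of `Δc`. -/
def lap (L₁ L₂ : ℝ) (c : ℤ × ℤ → ℂ) : ℤ × ℤ → ℂ :=
  fun n => -((ksq (wn L₁ L₂ n) : ℝ) : ℂ) * c n

/-- The operator `I_Ω`: Fourier multiplier with symbol `1/(iΩ_k) = i|k|²/k₁` on `k₁ ≠ 0`. -/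
def iOm (L₁ L₂ : ℝ) (c : ℤ × ℤ → ℂ) : ℤ × ℤ → ℂ := fun n =>
  if n.1 = 0 then 0
  else Complex.I * ((ksq (wn L₁ L₂ n) / (wn L₁ L₂ n).1 : ℝ) : ℂ) * c n

/-- `B_{jkl} = |M| (j∧k)/|j|²` when `j + k = l`, and `0` otherwise. -/
def bco (L₁ L₂ : ℝ) (nj nk nl : ℤ × ℤ) : ℝ :=
  if nj + nk = nl then L₁ * L₂ * wedge (wn L₁ L₂ nj) (wn L₁ L₂ nk) / ksq (wn L₁ L₂ nj)
  else 0

/-- Dot product on `ℝ²`. -/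
def dotR (a b : ℝ × ℝ) : ℝ := a.1 * b.1 + a.2 * b.2

/-- The complex exponential `e^{i k·x}`. -/
def expf (k : ℝ × ℝ) (x : ℝ × ℝ) : ℂ := Complex.exp (Complex.I * ((dotR k x : ℝ) : ℂ))

/-- Directional derivative `∂_v g (x)`. -/
def pd (v : ℝ × ℝ) (g : ℝ × ℝ → ℂ) (x : ℝ × ℝ) : ℂ := fderiv ℝ g x v

/-- `Δ⁻¹ e^{i j·x} := −e^{i j·x}/|j|²`. -/
def invLapExp (j : ℝ × ℝ) : ℝ × ℝ → ℂ := fun x => -expf j x / ((ksq j : ℝ) : ℂ)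

/-- `B(e^{ij·x}, e^{ik·x}) = (∇⊥Δ⁻¹e^{ij·x})·∇e^{ik·x}` pointwise,
with `∇⊥ = (−∂_y, ∂_x)`. -/
def Bpt (j k : ℝ × ℝ) (x : ℝ × ℝ) : ℂ :=
  -pd (0, 1) (invLapExp j) x * pd (1, 0) (expf k) x
    + pd (1, 0) (invLapExp j) x * pd (0, 1) (expf k) x

/-- The `L^∞(M)` norm of the field with Fourier coefficients `c`. -/
def linf (L₁ L₂ : ℝ) (c : ℤ × ℤ → ℂ) : ℝ :=
  ⨆ x : ℝ × ℝ, ‖∑' n : ℤ × ℤ, c n * Complex.exp (Complex.I * ((dotR (wn L₁ L₂ n) x : ℝ) : ℂ))‖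

/-- Euclidean norm of an integer lattice point. -/
def zn (k : ℤ × ℤ) : ℝ := Real.sqrt ((k.1 : ℝ) ^ 2 + (k.2 : ℝ) ^ 2)

/-- A classical solution `ω` (in Fourier representation) of the β-plane vorticity equation
`∂ₜω + B(ω,ω) + (1/ε)Lω + μAω = f` on `M × (0,∞)`:
smooth, `M`-periodic, real-valued and of zero spatial mean for every `t`,
with `f` smooth, periodic and zero-mean.  Mode by mode the equation reads
`d/dt ω_l = f_l − B(ω,ω)_l − (iΩ_l/ε) ω_l − μ|l|² ω_l`. -/
structure IsSolution (L₁ L₂ μ ε : ℝ) (ω f : ℝ → ℤ × ℤ → ℂ) : Prop where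
  mean_ω : ∀ t, ω t 0 = 0
  mean_f : ∀ t, f t 0 = 0
  real_ω : ∀ t, realField (ω t)
  real_f : ∀ t, realField (f t)
  reg_ω : ∀ t, regular L₁ L₂ (ω t)
  reg_f : ∀ t, regular L₁ L₂ (f t)
  cont_ω : ∀ n, Continuous fun t => ω t n
  eqn : ∀ t, 0 < t → ∀ l : ℤ × ℤ,
    HasDerivAt (fun τ => ω τ l)
      (f t l - bconv L₁ L₂ (ω t) (ω t) l
        - Complex.I * ((Om L₁ L₂ l : ℝ) : ℂ) / ((ε : ℝ) : ℂ) * ω t l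
        - ((μ : ℝ) : ℂ) * ((ksq (wn L₁ L₂ l) : ℝ) : ℂ) * ω t l) t


section Statement17Helpers
open Finset

lemma tele_core (h : ℕ → ℝ) (M N : ℕ) (hMN : M ≤ N) :
    ∑ k ∈ Finset.Ioc M N, (h k - h (k-1)) = h N - h M := by
  have e : Finset.Ioc M N = Finset.Ico (M+1) (N+1) := by
    ext x; simp only [Finset.mem_Ioc, Finset.mem_Ico]; omega
  rw [e, Finset.sum_Ico_eq_sum_range]
  have e2 : N + 1 - (M + 1) = N - M := by omega
  rw [e2]
  calc ∑ i ∈ Finset.range (N - M), (h (M + 1 + i) - h (M + 1 + i - 1))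
      = ∑ i ∈ Finset.range (N - M), ((fun j => h (M + j)) (i+1) - (fun j => h (M + j)) i) := by
        refine Finset.sum_congr rfl fun i _ => ?_
        simp only []
        congr 2 <;> omega
    _ = h (M + (N - M)) - h (M + 0) := Finset.sum_range_sub (fun j => h (M + j)) (N - M)
    _ = h N - h M := by congr 2 <;> omega

lemma sum_tele_le (g : ℕ → ℝ) (hg0 : ∀ n, 0 ≤ g n) (hmono : ∀ m n, m ≤ n → g n ≤ g m)
    (M : ℕ) (t : Finset ℕ) (ht : ∀ k ∈ t, M < k) :
    ∑ k ∈ t, (g (k-1) - g k) ≤ g M := by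
  rcases t.eq_empty_or_nonempty with rfl | hne
  · simpa using hg0 M
  · set K := t.sup id with hK
    have hMK : M < K := lt_of_lt_of_le (ht _ hne.choose_spec) (Finset.le_sup (f := id) hne.choose_spec)
    have hsub : t ⊆ Finset.Ioc M K := fun k hk =>
      Finset.mem_Ioc.mpr ⟨ht k hk, Finset.le_sup (f := id) hk⟩
    have h1 : ∑ k ∈ t, (g (k-1) - g k) ≤ ∑ k ∈ Finset.Ioc M K, (g (k-1) - g k) :=
      Finset.sum_le_sum_of_subset_of_nonneg hsub
        (fun k _ _ => sub_nonneg.mpr (hmono _ _ (Nat.sub_le k 1)))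
    have h2 : ∑ k ∈ Finset.Ioc M K, (g (k-1) - g k) = g M - g K := by
      have h := tele_core (fun k => -g k) M K hMK.le
      have e : ∑ k ∈ Finset.Ioc M K, (g (k-1) - g k)
          = ∑ k ∈ Finset.Ioc M K, ((fun k => -g k) k - (fun k => -g k) (k-1)) :=
        Finset.sum_congr rfl fun k _ => by simp only []; ring
      rw [e, h]; ring
    linarith [hg0 K]

lemma sum_tele_le' (h : ℕ → ℝ) (hmono : ∀ m n, m ≤ n → h m ≤ h n)
    (M N : ℕ) (hMN : M ≤ N) (t : Finset ℕ) (ht : ∀ k ∈ t, M < k ∧ k ≤ N) :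
    ∑ k ∈ t, (h k - h (k-1)) ≤ h N - h M := by
  have hsub : t ⊆ Finset.Ioc M N := fun k hk => Finset.mem_Ioc.mpr (ht k hk)
  have h1 : ∑ k ∈ t, (h k - h (k-1)) ≤ ∑ k ∈ Finset.Ioc M N, (h k - h (k-1)) :=
    Finset.sum_le_sum_of_subset_of_nonneg hsub
      (fun k _ _ => sub_nonneg.mpr (hmono _ _ (Nat.sub_le k 1)))
  rw [tele_core h M N hMN] at h1
  exact h1



noncomputable def gi (n : ℕ) : ℝ := ((max n 1 : ℕ) : ℝ)⁻¹

lemma gi_nonneg (n : ℕ) : 0 ≤ gi n := inv_nonneg.mpr (Nat.cast_nonneg _)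
lemma gi_anti : ∀ m n : ℕ, m ≤ n → gi n ≤ gi m := by
  intro m n h
  unfold gi
  apply inv_anti₀
  · exact_mod_cast Nat.lt_of_lt_of_le Nat.zero_lt_one (le_max_right m 1)
  · exact_mod_cast max_le_max h (le_refl 1)
lemma gi_eq {n : ℕ} (h : 1 ≤ n) : gi n = ((n:ℝ))⁻¹ := by
  unfold gi; rw [max_eq_left h]

/-- tail bound: sum over k > M of 1/k² is at most 1/M -/
lemma tail_sq (M : ℕ) (hM : 1 ≤ M) (t : Finset ℕ) (ht : ∀ k ∈ t, M < k) :
    ∑ k ∈ t, ((k:ℝ)^2)⁻¹ ≤ ((M:ℝ))⁻¹ := by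
  have key : ∑ k ∈ t, ((k:ℝ)^2)⁻¹ ≤ ∑ k ∈ t, (gi (k-1) - gi k) := by
    refine Finset.sum_le_sum fun k hk => ?_
    have hk2 : 2 ≤ k := by have := ht k hk; omega
    rw [gi_eq (by omega : 1 ≤ k), gi_eq (by omega : 1 ≤ k - 1)]
    have hc : ((k - 1 : ℕ) : ℝ) = (k:ℝ) - 1 := by
      push_cast [Nat.cast_sub (by omega : 1 ≤ k)]; ring
    rw [hc]
    have hk0 : (2:ℝ) ≤ (k:ℝ) := by exact_mod_cast hk2
    have hA : (k:ℝ) - 1 ≠ 0 := by linarith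
    have hB : (k:ℝ) ≠ 0 := by linarith
    have e : ((k:ℝ) - 1)⁻¹ - ((k:ℝ))⁻¹ = (((k:ℝ) - 1) * (k:ℝ))⁻¹ := by
      field_simp; ring
    rw [e]
    apply inv_anti₀ (by nlinarith) (by nlinarith)
  refine key.trans (sum_tele_le gi gi_nonneg gi_anti M t ht) |>.trans_eq ?_
  rw [gi_eq hM]

/-- total: sum over k ≥ 1 of 1/k² is at most 2 -/
lemma total_sq (t : Finset ℕ) (ht : ∀ k ∈ t, 1 ≤ k) :
    ∑ k ∈ t, ((k:ℝ)^2)⁻¹ ≤ 2 := by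
  rw [← Finset.sum_filter_add_sum_filter_not t (fun k => 1 < k)]
  have h1 : ∑ k ∈ t.filter (fun k => 1 < k), ((k:ℝ)^2)⁻¹ ≤ 1 := by
    have := tail_sq 1 le_rfl (t.filter (fun k => 1 < k))
      (fun k hk => (Finset.mem_filter.mp hk).2)
    simpa using this
  have h2 : ∑ k ∈ t.filter (fun k => ¬ 1 < k), ((k:ℝ)^2)⁻¹ ≤ 1 := by
    have hsub : t.filter (fun k => ¬ 1 < k) ⊆ {1} := by
      intro k hk
      rcases Finset.mem_filter.mp hk with ⟨hkt, hk1⟩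
      have := ht k hkt
      simp only [Finset.mem_singleton]; omega
    calc ∑ k ∈ t.filter (fun k => ¬ 1 < k), ((k:ℝ)^2)⁻¹
        ≤ ∑ k ∈ ({1} : Finset ℕ), ((k:ℝ)^2)⁻¹ :=
          Finset.sum_le_sum_of_subset_of_nonneg hsub (fun k _ _ => by positivity)
      _ = 1 := by norm_num
  linarith

/-- harmonic bound -/
lemma harm (N : ℕ) (hN : 1 ≤ N) (t : Finset ℕ) (ht : ∀ k ∈ t, 1 ≤ k ∧ k ≤ N) :
    ∑ k ∈ t, ((k:ℝ))⁻¹ ≤ 1 + Real.log N := by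
  rw [← Finset.sum_filter_add_sum_filter_not t (fun k => 1 < k)]
  have h2 : ∑ k ∈ t.filter (fun k => ¬ 1 < k), ((k:ℝ))⁻¹ ≤ 1 := by
    have hsub : t.filter (fun k => ¬ 1 < k) ⊆ {1} := by
      intro k hk
      rcases Finset.mem_filter.mp hk with ⟨hkt, hk1⟩
      have := (ht k hkt).1
      simp only [Finset.mem_singleton]; omega
    calc ∑ k ∈ t.filter (fun k => ¬ 1 < k), ((k:ℝ))⁻¹
        ≤ ∑ k ∈ ({1} : Finset ℕ), ((k:ℝ))⁻¹ :=
          Finset.sum_le_sum_of_subset_of_nonneg hsub (fun k _ _ => by positivity)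
      _ = 1 := by norm_num
  have h1 : ∑ k ∈ t.filter (fun k => 1 < k), ((k:ℝ))⁻¹ ≤ Real.log N := by
    set h : ℕ → ℝ := fun n => Real.log (max n 1 : ℕ) with hh
    have hmono : ∀ m n : ℕ, m ≤ n → h m ≤ h n := by
      intro m n hmn
      apply Real.log_le_log (by exact_mod_cast Nat.lt_of_lt_of_le Nat.zero_lt_one (le_max_right m 1))
      exact_mod_cast max_le_max hmn (le_refl 1)
    have key : ∑ k ∈ t.filter (fun k => 1 < k), ((k:ℝ))⁻¹
        ≤ ∑ k ∈ t.filter (fun k => 1 < k), (h k - h (k-1)) := by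
      refine Finset.sum_le_sum fun k hk => ?_
      have hk2 : 2 ≤ k := (Finset.mem_filter.mp hk).2
      have hc : h k = Real.log k := by
        simp only [hh]; rw [max_eq_left (by omega : 1 ≤ k)]
      have hc2 : h (k-1) = Real.log ((k:ℝ) - 1) := by
        simp only [hh]; rw [max_eq_left (by omega : 1 ≤ k - 1)]
        congr 1
        push_cast [Nat.cast_sub (by omega : 1 ≤ k)]; ring
      rw [hc, hc2]
      have hk0 : (2:ℝ) ≤ (k:ℝ) := by exact_mod_cast hk2
      have hlog : Real.log (((k:ℝ)-1)/(k:ℝ)) ≤ (((k:ℝ)-1)/(k:ℝ)) - 1 :=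
        Real.log_le_sub_one_of_pos (div_pos (by linarith) (by linarith))
      rw [Real.log_div (by linarith) (by linarith)] at hlog
      have : (((k:ℝ)-1)/(k:ℝ)) - 1 = -((k:ℝ))⁻¹ := by field_simp; ring
      rw [this] at hlog
      linarith
    have h3 := sum_tele_le' h hmono 1 N (by omega) (t.filter (fun k => 1 < k))
      (fun k hk => ⟨(Finset.mem_filter.mp hk).2, (ht k (Finset.mem_filter.mp hk).1).2⟩)
    have hN1 : h N = Real.log N := by
      simp only [hh]; rw [max_eq_left hN]
    have h11 : h 1 = 0 := by simp [hh]
    rw [hN1, h11] at h3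
    linarith
  linarith

/-- cube tail: sum over k with 1 ≤ k and ρ² ≤ 2k² of 1/k³ is at most 4/ρ² -/
lemma cube_tail (ρ : ℝ) (hρ : 0 < ρ) (t : Finset ℕ) (ht : ∀ k ∈ t, 1 ≤ k ∧ ρ^2 ≤ 2 * (k:ℝ)^2) :
    ∑ k ∈ t, ((k:ℝ)^3)⁻¹ ≤ 4 / ρ^2 := by
  set σ : ℝ := ρ / Real.sqrt 2 with hσ
  have hσpos : 0 < σ := by positivity
  set M : ℕ := ⌈σ⌉₊ with hM
  have hM1 : 1 ≤ M := Nat.one_le_iff_ne_zero.mpr (by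
    simp only [hM, ne_eq, Nat.ceil_eq_zero, not_le]; exact hσpos)
  have hMk : ∀ k ∈ t, M ≤ k := by
    intro k hk
    rcases ht k hk with ⟨hk1, hk2⟩
    apply Nat.ceil_le.mpr
    rw [hσ, div_le_iff₀ (by positivity)]
    have h1 : ρ ≤ Real.sqrt (2*(k:ℝ)^2) := by
      rw [← Real.sqrt_sq hρ.le]
      exact Real.sqrt_le_sqrt (by linarith)
    have h2 : Real.sqrt (2*(k:ℝ)^2) = Real.sqrt 2 * (k:ℝ) := by
      rw [Real.sqrt_mul (by norm_num : (0:ℝ) ≤ 2), Real.sqrt_sq (Nat.cast_nonneg k)]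
    rw [h2] at h1
    linarith
  have hMσ : σ ≤ M := Nat.le_ceil σ
  -- 1/k³ ≤ (1/M)(1/k²)
  have step1 : ∑ k ∈ t, ((k:ℝ)^3)⁻¹ ≤ ((M:ℝ))⁻¹ * ∑ k ∈ t, ((k:ℝ)^2)⁻¹ := by
    rw [Finset.mul_sum]
    refine Finset.sum_le_sum fun k hk => ?_
    have hMk' := hMk k hk
    have hk1 := (ht k hk).1
    have hkR : (1:ℝ) ≤ (k:ℝ) := by exact_mod_cast hk1
    have hMR : (M:ℝ) ≤ (k:ℝ) := by exact_mod_cast hMk'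
    have hMR1 : (1:ℝ) ≤ (M:ℝ) := by exact_mod_cast hM1
    rw [← mul_inv]
    apply inv_anti₀ (by positivity)
    nlinarith
  have step2 : ∑ k ∈ t, ((k:ℝ)^2)⁻¹ ≤ 2 * ((M:ℝ))⁻¹ := by
    rw [← Finset.sum_filter_add_sum_filter_not t (fun k => M < k)]
    have ha : ∑ k ∈ t.filter (fun k => M < k), ((k:ℝ)^2)⁻¹ ≤ ((M:ℝ))⁻¹ :=
      tail_sq M hM1 _ (fun k hk => (Finset.mem_filter.mp hk).2)
    have hb : ∑ k ∈ t.filter (fun k => ¬ M < k), ((k:ℝ)^2)⁻¹ ≤ ((M:ℝ))⁻¹ := by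
      have hsub : t.filter (fun k => ¬ M < k) ⊆ {M} := by
        intro k hk
        rcases Finset.mem_filter.mp hk with ⟨hkt, hk1⟩
        have := hMk k hkt
        simp only [Finset.mem_singleton]; omega
      calc ∑ k ∈ t.filter (fun k => ¬ M < k), ((k:ℝ)^2)⁻¹
          ≤ ∑ k ∈ ({M} : Finset ℕ), ((k:ℝ)^2)⁻¹ :=
            Finset.sum_le_sum_of_subset_of_nonneg hsub (fun k _ _ => by positivity)
        _ = ((M:ℝ)^2)⁻¹ := by simp
        _ ≤ ((M:ℝ))⁻¹ := by
            have hMR1 : (1:ℝ) ≤ (M:ℝ) := by exact_mod_cast hM1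
            apply inv_anti₀ (by positivity); nlinarith
    linarith
  have hMR1 : (1:ℝ) ≤ (M:ℝ) := by exact_mod_cast hM1
  have hfinal : ((M:ℝ))⁻¹ * (2 * ((M:ℝ))⁻¹) ≤ 4 / ρ^2 := by
    have h1 : ρ^2 ≤ 2 * (M:ℝ)^2 := by
      have : σ^2 ≤ (M:ℝ)^2 := by nlinarith
      have hs : σ^2 = ρ^2 / 2 := by
        rw [hσ, div_pow, Real.sq_sqrt (by norm_num : (0:ℝ) ≤ 2)]
      nlinarith
    rw [div_eq_mul_inv]
    have hMpos : (0:ℝ) < (M:ℝ) := by linarith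
    have e : ((M:ℝ))⁻¹ * (2 * ((M:ℝ))⁻¹) = 2 * ((M:ℝ)^2)⁻¹ := by
      rw [pow_two, mul_inv]; ring
    rw [e]
    have h2 : ((M:ℝ)^2)⁻¹ ≤ 2 * (ρ^2)⁻¹ := by
      have ha := inv_anti₀ (show (0:ℝ) < ρ^2/2 by positivity) (show ρ^2/2 ≤ (M:ℝ)^2 by linarith)
      rw [inv_div] at ha
      calc ((M:ℝ)^2)⁻¹ ≤ 2 / ρ^2 := ha
        _ = 2 * (ρ^2)⁻¹ := by rw [div_eq_mul_inv]
    linarith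
  calc ∑ k ∈ t, ((k:ℝ)^3)⁻¹ ≤ ((M:ℝ))⁻¹ * ∑ k ∈ t, ((k:ℝ)^2)⁻¹ := step1
    _ ≤ ((M:ℝ))⁻¹ * (2 * ((M:ℝ))⁻¹) := by
        apply mul_le_mul_of_nonneg_left step2 (by positivity)
    _ ≤ 4 / ρ^2 := hfinal



lemma refl_even (g : ℕ → ℝ) (hg : ∀ k, 0 ≤ g k) (s : Finset ℤ) (hs : (0:ℤ) ∉ s) :
    ∑ j ∈ s, g j.natAbs ≤ 2 * ∑ k ∈ s.image Int.natAbs, g k := by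
  classical
  have key : ∀ (p : ℤ → Prop) [DecidablePred p],
      (∀ x y : ℤ, x ∈ s.filter p → y ∈ s.filter p → x.natAbs = y.natAbs → x = y) →
      ∑ j ∈ s.filter p, g j.natAbs ≤ ∑ k ∈ s.image Int.natAbs, g k := by
    intro p _ hinj
    have e : ∑ k ∈ (s.filter p).image Int.natAbs, g k = ∑ j ∈ s.filter p, g j.natAbs :=
      Finset.sum_image (fun x hx y hy h => hinj x y hx hy h)
    rw [← e]
    apply Finset.sum_le_sum_of_subset_of_nonneg
    · exact Finset.image_subset_image (Finset.filter_subset _ _)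
    · intro k _ _; exact hg k
  have h1 := key (fun j => 0 < j) (fun x y hx hy h => by
    have := (Finset.mem_filter.mp hx).2
    have := (Finset.mem_filter.mp hy).2
    omega)
  have h2 := key (fun j => ¬ 0 < j) (fun x y hx hy h => by
    have hx0 : x ≠ 0 := fun he => hs (he ▸ (Finset.mem_filter.mp hx).1)
    have hy0 : y ≠ 0 := fun he => hs (he ▸ (Finset.mem_filter.mp hy).1)
    have := (Finset.mem_filter.mp hx).2
    have := (Finset.mem_filter.mp hy).2
    omega)
  have hsplit : ∑ j ∈ s.filter (fun j => 0 < j), g j.natAbs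
      + ∑ j ∈ s.filter (fun j => ¬ 0 < j), g j.natAbs = ∑ j ∈ s, g j.natAbs :=
    Finset.sum_filter_add_sum_filter_not s _ _
  linarith

lemma rowNat2 (m : ℕ) (hm : 1 ≤ m) (t : Finset ℕ) (ht : ∀ k ∈ t, 1 ≤ k) :
    ∑ k ∈ t, (((m:ℝ))^2 + ((k:ℝ))^2)⁻¹ ≤ 2 / m := by
  classical
  rw [← Finset.sum_filter_add_sum_filter_not t (fun k => m < k)]
  have hmR : (1:ℝ) ≤ (m:ℝ) := by exact_mod_cast hm
  have ha : ∑ k ∈ t.filter (fun k => m < k), (((m:ℝ))^2 + ((k:ℝ))^2)⁻¹ ≤ ((m:ℝ))⁻¹ := by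
    calc ∑ k ∈ t.filter (fun k => m < k), (((m:ℝ))^2 + ((k:ℝ))^2)⁻¹
        ≤ ∑ k ∈ t.filter (fun k => m < k), ((k:ℝ)^2)⁻¹ := by
          refine Finset.sum_le_sum fun k hk => ?_
          have h1 : (1:ℝ) ≤ (k:ℝ) := by
            have := ht k (Finset.mem_filter.mp hk).1; exact_mod_cast this
          apply inv_anti₀ (by positivity); nlinarith
      _ ≤ ((m:ℝ))⁻¹ := tail_sq m hm _ (fun k hk => (Finset.mem_filter.mp hk).2)
  have hb : ∑ k ∈ t.filter (fun k => ¬ m < k), (((m:ℝ))^2 + ((k:ℝ))^2)⁻¹ ≤ ((m:ℝ))⁻¹ := by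
    have hsub : t.filter (fun k => ¬ m < k) ⊆ Finset.Icc 1 m := by
      intro k hk
      rcases Finset.mem_filter.mp hk with ⟨hkt, hk1⟩
      exact Finset.mem_Icc.mpr ⟨ht k hkt, by omega⟩
    calc ∑ k ∈ t.filter (fun k => ¬ m < k), (((m:ℝ))^2 + ((k:ℝ))^2)⁻¹
        ≤ (t.filter (fun k => ¬ m < k)).card • (((m:ℝ))^2)⁻¹ := by
          apply Finset.sum_le_card_nsmul
          intro k _
          apply inv_anti₀ (by positivity)
          nlinarith [sq_nonneg ((k:ℝ))]
      _ ≤ (m : ℝ) * (((m:ℝ))^2)⁻¹ := by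
          rw [nsmul_eq_mul]
          apply mul_le_mul_of_nonneg_right _ (by positivity)
          have := Finset.card_le_card hsub
          rw [Nat.card_Icc] at this
          exact_mod_cast le_trans (Nat.cast_le.mpr this) (by norm_num)
      _ ≤ ((m:ℝ))⁻¹ := by
          rw [pow_two, mul_inv]
          rw [← mul_assoc, mul_inv_cancel₀ (by linarith)]
          simp
  have : (2:ℝ)/m = ((m:ℝ))⁻¹ + ((m:ℝ))⁻¹ := by
    rw [div_eq_mul_inv]; ring
  linarith

lemma rowNat4 (m : ℕ) (hm : 1 ≤ m) (t : Finset ℕ) (ht : ∀ k ∈ t, 1 ≤ k) :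
    ∑ k ∈ t, ((((m:ℝ))^2 + ((k:ℝ))^2)^2)⁻¹ ≤ 2 / (m:ℝ)^3 := by
  classical
  rw [← Finset.sum_filter_add_sum_filter_not t (fun k => m < k)]
  have hmR : (1:ℝ) ≤ (m:ℝ) := by exact_mod_cast hm
  have ha : ∑ k ∈ t.filter (fun k => m < k), ((((m:ℝ))^2 + ((k:ℝ))^2)^2)⁻¹ ≤ ((m:ℝ)^3)⁻¹ := by
    calc ∑ k ∈ t.filter (fun k => m < k), ((((m:ℝ))^2 + ((k:ℝ))^2)^2)⁻¹
        ≤ ∑ k ∈ t.filter (fun k => m < k), ((m:ℝ)^2)⁻¹ * ((k:ℝ)^2)⁻¹ := by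
          refine Finset.sum_le_sum fun k hk => ?_
          have hmk : m < k := (Finset.mem_filter.mp hk).2
          have h1 : (m:ℝ) ≤ (k:ℝ) := by exact_mod_cast hmk.le
          rw [← mul_inv]
          apply inv_anti₀ (mul_pos (pow_pos (by linarith) 2) (pow_pos (by linarith) 2))
          nlinarith [sq_nonneg ((k:ℝ))]
      _ = ((m:ℝ)^2)⁻¹ * ∑ k ∈ t.filter (fun k => m < k), ((k:ℝ)^2)⁻¹ := by
          rw [Finset.mul_sum]
      _ ≤ ((m:ℝ)^2)⁻¹ * ((m:ℝ))⁻¹ := by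
          apply mul_le_mul_of_nonneg_left
            (tail_sq m hm _ (fun k hk => (Finset.mem_filter.mp hk).2)) (by positivity)
      _ = ((m:ℝ)^3)⁻¹ := by rw [← mul_inv, ← pow_succ]
  have hb : ∑ k ∈ t.filter (fun k => ¬ m < k), ((((m:ℝ))^2 + ((k:ℝ))^2)^2)⁻¹ ≤ ((m:ℝ)^3)⁻¹ := by
    have hsub : t.filter (fun k => ¬ m < k) ⊆ Finset.Icc 1 m := by
      intro k hk
      rcases Finset.mem_filter.mp hk with ⟨hkt, hk1⟩
      exact Finset.mem_Icc.mpr ⟨ht k hkt, by omega⟩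
    calc ∑ k ∈ t.filter (fun k => ¬ m < k), ((((m:ℝ))^2 + ((k:ℝ))^2)^2)⁻¹
        ≤ (t.filter (fun k => ¬ m < k)).card • (((m:ℝ))^4)⁻¹ := by
          apply Finset.sum_le_card_nsmul
          intro k _
          apply inv_anti₀ (by positivity)
          nlinarith [sq_nonneg ((k:ℝ)), sq_nonneg ((k:ℝ)^2), sq_nonneg ((m:ℝ)*(k:ℝ))]
      _ ≤ (m : ℝ) * (((m:ℝ))^4)⁻¹ := by
          rw [nsmul_eq_mul]
          apply mul_le_mul_of_nonneg_right _ (by positivity)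
          have := Finset.card_le_card hsub
          rw [Nat.card_Icc] at this
          exact_mod_cast le_trans (Nat.cast_le.mpr this) (by norm_num)
      _ ≤ ((m:ℝ)^3)⁻¹ := by
          have e : (m:ℝ) * (((m:ℝ))^4)⁻¹ = ((m:ℝ)^3)⁻¹ := by
            field_simp
          rw [e]
  have : (2:ℝ)/(m:ℝ)^3 = ((m:ℝ)^3)⁻¹ + ((m:ℝ)^3)⁻¹ := by
    rw [div_eq_mul_inv]; ring
  linarith

lemma natAbs_sq_cast (j : ℤ) : ((j.natAbs : ℝ))^2 = ((j:ℝ))^2 := by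
  rw [Nat.cast_natAbs, Int.cast_abs, sq_abs]

lemma rowZ2 (m : ℕ) (hm : 1 ≤ m) (s : Finset ℤ) :
    ∑ j ∈ s, (((m:ℝ))^2 + ((j:ℝ))^2)⁻¹ ≤ 5 / m := by
  classical
  have hmR : (1:ℝ) ≤ (m:ℝ) := by exact_mod_cast hm
  set f : ℤ → ℝ := fun j => (((m:ℝ))^2 + ((j:ℝ))^2)⁻¹ with hf
  have hrest : ∑ j ∈ s.erase 0, f j ≤ 4 / m := by
    set g : ℕ → ℝ := fun k => (((m:ℝ))^2 + ((k:ℝ))^2)⁻¹ with hg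
    have hfg : ∀ j : ℤ, f j = g j.natAbs := by
      intro j; simp only [hf, hg, natAbs_sq_cast]
    have h1 : ∑ j ∈ s.erase 0, f j = ∑ j ∈ s.erase 0, g j.natAbs :=
      Finset.sum_congr rfl fun j _ => hfg j
    rw [h1]
    have h2 := refl_even g (fun k => by positivity) (s.erase 0) (Finset.notMem_erase 0 s)
    have h3 : ∑ k ∈ (s.erase 0).image Int.natAbs, g k ≤ 2 / m := by
      apply rowNat2 m hm
      intro k hk
      rcases Finset.mem_image.mp hk with ⟨j, hj, rfl⟩
      have hj0 : j ≠ 0 := Finset.ne_of_mem_erase hj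
      omega
    calc ∑ j ∈ s.erase 0, g j.natAbs ≤ 2 * ∑ k ∈ (s.erase 0).image Int.natAbs, g k := h2
      _ ≤ 2 * (2 / m) := by linarith
      _ = 4 / m := by ring
  have h0 : f 0 ≤ 1 / m := by
    simp only [hf]
    push_cast
    rw [one_div]
    apply inv_anti₀ (by linarith)
    nlinarith
  by_cases h : (0:ℤ) ∈ s
  · have := Finset.sum_erase_add s f h
    have e : (5:ℝ)/m = 4/m + 1/m := by ring
    rw [e, ← this]
    exact add_le_add hrest h0
  · rw [← Finset.erase_eq_of_notMem h]
    calc ∑ j ∈ s.erase 0, f j ≤ 4 / m := hrest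
      _ ≤ 5 / m := by
        apply div_le_div_of_nonneg_right (by norm_num) (by linarith)

lemma rowZ4 (m : ℕ) (hm : 1 ≤ m) (s : Finset ℤ) :
    ∑ j ∈ s, ((((m:ℝ))^2 + ((j:ℝ))^2)^2)⁻¹ ≤ 5 / (m:ℝ)^3 := by
  classical
  have hmR : (1:ℝ) ≤ (m:ℝ) := by exact_mod_cast hm
  set f : ℤ → ℝ := fun j => ((((m:ℝ))^2 + ((j:ℝ))^2)^2)⁻¹ with hf
  have hrest : ∑ j ∈ s.erase 0, f j ≤ 4 / (m:ℝ)^3 := by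
    set g : ℕ → ℝ := fun k => ((((m:ℝ))^2 + ((k:ℝ))^2)^2)⁻¹ with hg
    have hfg : ∀ j : ℤ, f j = g j.natAbs := by
      intro j; simp only [hf, hg, natAbs_sq_cast]
    have h1 : ∑ j ∈ s.erase 0, f j = ∑ j ∈ s.erase 0, g j.natAbs :=
      Finset.sum_congr rfl fun j _ => hfg j
    rw [h1]
    have h2 := refl_even g (fun k => by positivity) (s.erase 0) (Finset.notMem_erase 0 s)
    have h3 : ∑ k ∈ (s.erase 0).image Int.natAbs, g k ≤ 2 / (m:ℝ)^3 := by
      apply rowNat4 m hm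
      intro k hk
      rcases Finset.mem_image.mp hk with ⟨j, hj, rfl⟩
      have hj0 : j ≠ 0 := Finset.ne_of_mem_erase hj
      omega
    calc ∑ j ∈ s.erase 0, g j.natAbs ≤ 2 * ∑ k ∈ (s.erase 0).image Int.natAbs, g k := h2
      _ ≤ 2 * (2 / (m:ℝ)^3) := by linarith
      _ = 4 / (m:ℝ)^3 := by ring
  have h0 : f 0 ≤ 1 / (m:ℝ)^3 := by
    simp only [hf]
    push_cast
    rw [one_div]
    apply inv_anti₀ (pow_pos (by linarith) 3)
    nlinarith
  by_cases h : (0:ℤ) ∈ s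
  · have := Finset.sum_erase_add s f h
    have e : (5:ℝ)/(m:ℝ)^3 = 4/(m:ℝ)^3 + 1/(m:ℝ)^3 := by ring
    rw [e, ← this]
    exact add_le_add hrest h0
  · rw [← Finset.erase_eq_of_notMem h]
    calc ∑ j ∈ s.erase 0, f j ≤ 4 / (m:ℝ)^3 := hrest
      _ ≤ 5 / (m:ℝ)^3 :=
        div_le_div_of_nonneg_right (by norm_num) (le_of_lt (pow_pos (by linarith) 3))

lemma axisZ (s : Finset ℤ) (hs : (0:ℤ) ∉ s) :
    ∑ j ∈ s, (((j:ℝ))^2)⁻¹ ≤ 4 := by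
  classical
  set g : ℕ → ℝ := fun k => (((k:ℝ))^2)⁻¹ with hg
  have h1 : ∑ j ∈ s, (((j:ℝ))^2)⁻¹ = ∑ j ∈ s, g j.natAbs :=
    Finset.sum_congr rfl fun j _ => by simp only [hg, natAbs_sq_cast]
  rw [h1]
  have h2 := refl_even g (fun k => by positivity) s hs
  have h3 : ∑ k ∈ s.image Int.natAbs, g k ≤ 2 := by
    apply total_sq
    intro k hk
    rcases Finset.mem_image.mp hk with ⟨j, hj, rfl⟩
    have hj0 : j ≠ 0 := fun h => hs (h ▸ hj)
    omega
  linarith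

lemma fiber_bound (s : Finset (ℤ×ℤ)) (F : ℤ×ℤ → ℝ) (B : ℤ → ℝ)
    (hrow : ∀ m : ℤ, ∀ t : Finset ℤ, (∀ j ∈ t, (m, j) ∈ s) → ∑ j ∈ t, F (m, j) ≤ B m) :
    ∑ n ∈ s, F n ≤ ∑ m ∈ s.image Prod.fst, B m := by
  classical
  rw [← Finset.sum_fiberwise_of_maps_to
    (g := Prod.fst) (fun n hn => Finset.mem_image_of_mem _ hn) F]
  apply Finset.sum_le_sum
  intro m _
  set fib := s.filter (fun n => n.1 = m) with hfib
  have e : ∑ j ∈ fib.image Prod.snd, F (m, j) = ∑ n ∈ fib, F (m, n.2) :=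
    Finset.sum_image (fun x hx y hy h => by
      have hx1 : x.1 = m := (Finset.mem_filter.mp hx).2
      have hy1 : y.1 = m := (Finset.mem_filter.mp hy).2
      exact Prod.ext (hx1.trans hy1.symm) h)
  have e2 : ∑ n ∈ fib, F (m, n.2) = ∑ n ∈ fib, F n :=
    Finset.sum_congr rfl fun n hn => by
      have hn1 : n.1 = m := (Finset.mem_filter.mp hn).2
      rw [← hn1]
  rw [← e2, ← e]
  apply hrow
  intro j hj
  rcases Finset.mem_image.mp hj with ⟨n, hn, hn2⟩
  have hn1 : n.1 = m := (Finset.mem_filter.mp hn).2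
  have : n = (m, j) := Prod.ext hn1 hn2
  exact this ▸ (Finset.mem_filter.mp hn).1

lemma latt_low (R : ℝ) (hR : 1 ≤ R) (s : Finset (ℤ×ℤ))
    (hs : ∀ n ∈ s, n ≠ 0 ∧ (n.1:ℝ)^2 + (n.2:ℝ)^2 < R^2) :
    ∑ n ∈ s, (((n.1:ℝ))^2 + ((n.2:ℝ))^2)⁻¹ ≤ 24 * (1 + Real.log R) := by
  classical
  set F : ℤ×ℤ → ℝ := fun n => (((n.1:ℝ))^2 + ((n.2:ℝ))^2)⁻¹ with hF
  set N : ℕ := ⌈R⌉₊ with hN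
  have hN1 : 1 ≤ N := Nat.one_le_iff_ne_zero.mpr (by
    simp only [hN, ne_eq, Nat.ceil_eq_zero, not_le]; linarith)
  have hlogR : 0 ≤ Real.log R := Real.log_nonneg hR
  have hlogN : Real.log N ≤ 1 + Real.log R := by
    have h1 : (N:ℝ) ≤ 2*R := by
      have := Nat.ceil_lt_add_one (by linarith : (0:ℝ) ≤ R)
      rw [← hN] at this
      linarith
    calc Real.log N ≤ Real.log (2*R) :=
          Real.log_le_log (by exact_mod_cast hN1) h1
      _ = Real.log 2 + Real.log R := Real.log_mul (by norm_num) (by linarith)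
      _ ≤ 1 + Real.log R := by
          have := Real.log_le_sub_one_of_pos (by norm_num : (0:ℝ) < 2)
          linarith
  rw [← Finset.sum_filter_add_sum_filter_not s (fun n => n.1 = 0)]
  set s₀ := s.filter (fun n => n.1 = 0) with hs₀
  set s₁ := s.filter (fun n => ¬ n.1 = 0) with hs₁
  have hpart0 : ∑ n ∈ s₀, F n ≤ 4 := by
    have e : ∑ j ∈ s₀.image Prod.snd, ((j:ℝ)^2)⁻¹ = ∑ n ∈ s₀, ((n.2:ℝ)^2)⁻¹ :=
      Finset.sum_image (fun x hx y hy h => by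
        have hx1 : x.1 = 0 := (Finset.mem_filter.mp hx).2
        have hy1 : y.1 = 0 := (Finset.mem_filter.mp hy).2
        exact Prod.ext (hx1.trans hy1.symm) h)
    have e2 : ∑ n ∈ s₀, F n = ∑ n ∈ s₀, ((n.2:ℝ)^2)⁻¹ := by
      refine Finset.sum_congr rfl fun n hn => ?_
      have hn1 : n.1 = 0 := (Finset.mem_filter.mp hn).2
      simp only [hF, hn1]
      norm_num
    rw [e2, ← e]
    apply axisZ
    intro h0
    rcases Finset.mem_image.mp h0 with ⟨n, hn, hn2⟩
    have hn1 : n.1 = 0 := (Finset.mem_filter.mp hn).2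
    have : n = 0 := Prod.ext hn1 hn2
    exact (hs n (Finset.mem_filter.mp hn).1).1 this
  have hpart1 : ∑ n ∈ s₁, F n ≤ 10 * (1 + Real.log N) := by
    set B : ℤ → ℝ := fun m => if m = 0 then 0 else 5 / ((m.natAbs : ℝ)) with hB
    have hrow : ∀ m : ℤ, ∀ t : Finset ℤ, (∀ j ∈ t, (m, j) ∈ s₁) → ∑ j ∈ t, F (m, j) ≤ B m := by
      intro m t htm
      rcases t.eq_empty_or_nonempty with rfl | hne
      · simp only [Finset.sum_empty, hB]
        by_cases hm : m = 0
        · simp [hm]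
        · rw [if_neg hm]; positivity
      · have hm0 : m ≠ 0 := by
          rcases hne with ⟨j, hj⟩
          have := (Finset.mem_filter.mp (htm j hj)).2
          exact this
        have hm1 : 1 ≤ m.natAbs := by omega
        have e : ∀ j, F (m, j) = (((m.natAbs : ℝ))^2 + ((j:ℝ))^2)⁻¹ := by
          intro j; simp only [hF, natAbs_sq_cast]
        simp only [hB, if_neg hm0]
        calc ∑ j ∈ t, F (m, j) = ∑ j ∈ t, (((m.natAbs : ℝ))^2 + ((j:ℝ))^2)⁻¹ :=
              Finset.sum_congr rfl fun j _ => e j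
          _ ≤ 5 / (m.natAbs : ℝ) := rowZ2 m.natAbs hm1 t
    have h1 := fiber_bound s₁ F B hrow
    have h2 : ∑ m ∈ s₁.image Prod.fst, B m ≤ 10 * (1 + Real.log N) := by
      have h0ni : (0:ℤ) ∉ s₁.image Prod.fst := by
        intro h0
        rcases Finset.mem_image.mp h0 with ⟨n, hn, hn1⟩
        exact (Finset.mem_filter.mp hn).2 hn1
      set g : ℕ → ℝ := fun k => 5 / (k:ℝ) with hg
      have eB : ∀ m ∈ s₁.image Prod.fst, B m = g m.natAbs := by
        intro m hm
        have hm0 : m ≠ 0 := fun h => h0ni (h ▸ hm)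
        simp only [hB, hg, if_neg hm0]
      have h3 := refl_even g (fun k => by positivity) (s₁.image Prod.fst) h0ni
      have h4 : ∑ k ∈ (s₁.image Prod.fst).image Int.natAbs, g k ≤ 5 * (1 + Real.log N) := by
        have hcon : ∀ k ∈ (s₁.image Prod.fst).image Int.natAbs, 1 ≤ k ∧ k ≤ N := by
          intro k hk
          rcases Finset.mem_image.mp hk with ⟨m, hm, rfl⟩
          rcases Finset.mem_image.mp hm with ⟨n, hn, rfl⟩
          have hm0 : n.1 ≠ 0 := (Finset.mem_filter.mp hn).2
          constructor
          · omega
          · have hw := (hs n (Finset.mem_filter.mp hn).1).2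
            have hk2 : ((n.1.natAbs : ℝ))^2 < R^2 := by
              rw [natAbs_sq_cast]
              nlinarith [sq_nonneg ((n.2:ℝ))]
            have hkR : ((n.1.natAbs : ℝ)) < R := by
              nlinarith [Nat.cast_nonneg (α := ℝ) n.1.natAbs]
            have := Nat.lt_ceil.mpr hkR
            omega
        calc ∑ k ∈ (s₁.image Prod.fst).image Int.natAbs, g k
            = 5 * ∑ k ∈ (s₁.image Prod.fst).image Int.natAbs, ((k:ℝ))⁻¹ := by
              rw [Finset.mul_sum]
              exact Finset.sum_congr rfl fun k _ => by simp only [hg]; rw [div_eq_mul_inv]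
          _ ≤ 5 * (1 + Real.log N) := by
              have := harm N hN1 _ hcon
              linarith
      calc ∑ m ∈ s₁.image Prod.fst, B m = ∑ m ∈ s₁.image Prod.fst, g m.natAbs :=
            Finset.sum_congr rfl eB
        _ ≤ 2 * ∑ k ∈ (s₁.image Prod.fst).image Int.natAbs, g k := h3
        _ ≤ 2 * (5 * (1 + Real.log N)) := by linarith
        _ = 10 * (1 + Real.log N) := by ring
    linarith
  simp only [hF] at hpart0 hpart1
  linarith

lemma latt_high_half (ρ : ℝ) (hρ : 0 < ρ) (s : Finset (ℤ×ℤ))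
    (hs : ∀ n ∈ s, n.1 ≠ 0 ∧ ρ^2 ≤ 2*(n.1:ℝ)^2) :
    ∑ n ∈ s, ((((n.1:ℝ))^2 + ((n.2:ℝ))^2)^2)⁻¹ ≤ 40 / ρ^2 := by
  classical
  set F : ℤ×ℤ → ℝ := fun n => ((((n.1:ℝ))^2 + ((n.2:ℝ))^2)^2)⁻¹ with hF
  set B : ℤ → ℝ := fun m => if m = 0 then 0 else 5 / ((m.natAbs : ℝ))^3 with hB
  have hrow : ∀ m : ℤ, ∀ t : Finset ℤ, (∀ j ∈ t, (m, j) ∈ s) → ∑ j ∈ t, F (m, j) ≤ B m := by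
    intro m t htm
    rcases t.eq_empty_or_nonempty with rfl | hne
    · simp only [Finset.sum_empty, hB]
      by_cases hm : m = 0
      · simp [hm]
      · rw [if_neg hm]; positivity
    · have hm0 : m ≠ 0 := by
        rcases hne with ⟨j, hj⟩
        exact (hs _ (htm j hj)).1
      have hm1 : 1 ≤ m.natAbs := by omega
      have e : ∀ j, F (m, j) = ((((m.natAbs : ℝ))^2 + ((j:ℝ))^2)^2)⁻¹ := by
        intro j; simp only [hF, natAbs_sq_cast]
      simp only [hB, if_neg hm0]
      calc ∑ j ∈ t, F (m, j) = ∑ j ∈ t, ((((m.natAbs : ℝ))^2 + ((j:ℝ))^2)^2)⁻¹ :=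
            Finset.sum_congr rfl fun j _ => e j
        _ ≤ 5 / ((m.natAbs : ℝ))^3 := rowZ4 m.natAbs hm1 t
  have h1 := fiber_bound s F B hrow
  have h0ni : (0:ℤ) ∉ s.image Prod.fst := by
    intro h0
    rcases Finset.mem_image.mp h0 with ⟨n, hn, hn1⟩
    exact (hs n hn).1 hn1
  set g : ℕ → ℝ := fun k => 5 / ((k:ℝ))^3 with hg
  have eB : ∀ m ∈ s.image Prod.fst, B m = g m.natAbs := by
    intro m hm
    have hm0 : m ≠ 0 := fun h => h0ni (h ▸ hm)
    simp only [hB, hg, if_neg hm0]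
  have h3 := refl_even g (fun k => by positivity) (s.image Prod.fst) h0ni
  have h4 : ∑ k ∈ (s.image Prod.fst).image Int.natAbs, g k ≤ 5 * (4/ρ^2) := by
    have hcon : ∀ k ∈ (s.image Prod.fst).image Int.natAbs, 1 ≤ k ∧ ρ^2 ≤ 2*((k:ℝ))^2 := by
      intro k hk
      rcases Finset.mem_image.mp hk with ⟨m, hm, rfl⟩
      rcases Finset.mem_image.mp hm with ⟨n, hn, rfl⟩
      have hm0 := (hs n hn).1
      have hw := (hs n hn).2
      refine ⟨by omega, ?_⟩
      rw [natAbs_sq_cast]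
      exact hw
    calc ∑ k ∈ (s.image Prod.fst).image Int.natAbs, g k
        = 5 * ∑ k ∈ (s.image Prod.fst).image Int.natAbs, (((k:ℝ))^3)⁻¹ := by
          rw [Finset.mul_sum]
          exact Finset.sum_congr rfl fun k _ => by simp only [hg]; rw [div_eq_mul_inv]
      _ ≤ 5 * (4/ρ^2) := by
          have := cube_tail ρ hρ _ hcon
          linarith
  calc ∑ n ∈ s, F n ≤ ∑ m ∈ s.image Prod.fst, B m := h1
    _ = ∑ m ∈ s.image Prod.fst, g m.natAbs := Finset.sum_congr rfl eB
    _ ≤ 2 * ∑ k ∈ (s.image Prod.fst).image Int.natAbs, g k := h3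
    _ ≤ 2 * (5 * (4/ρ^2)) := by linarith
    _ = 40 / ρ^2 := by ring

lemma latt_high (ρ : ℝ) (hρ : 0 < ρ) (s : Finset (ℤ×ℤ))
    (hs : ∀ n ∈ s, n ≠ 0 ∧ ρ^2 ≤ (n.1:ℝ)^2 + (n.2:ℝ)^2) :
    ∑ n ∈ s, ((((n.1:ℝ))^2 + ((n.2:ℝ))^2)^2)⁻¹ ≤ 80 / ρ^2 := by
  classical
  set F : ℤ×ℤ → ℝ := fun n => ((((n.1:ℝ))^2 + ((n.2:ℝ))^2)^2)⁻¹ with hF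
  rw [← Finset.sum_filter_add_sum_filter_not s (fun n => n.2.natAbs ≤ n.1.natAbs)]
  set s₁ := s.filter (fun n => n.2.natAbs ≤ n.1.natAbs) with hs₁
  set s₂ := s.filter (fun n => ¬ n.2.natAbs ≤ n.1.natAbs) with hs₂
  have habs : ∀ x y : ℤ, x.natAbs ≤ y.natAbs → ((x:ℝ))^2 ≤ ((y:ℝ))^2 := by
    intro x y h
    rw [← natAbs_sq_cast x, ← natAbs_sq_cast y]
    have : (x.natAbs : ℝ) ≤ (y.natAbs : ℝ) := by exact_mod_cast h
    nlinarith [Nat.cast_nonneg (α := ℝ) x.natAbs]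
  have hhalf1 : ∑ n ∈ s₁, F n ≤ 40 / ρ^2 := by
    apply latt_high_half ρ hρ
    intro n hn
    rcases Finset.mem_filter.mp hn with ⟨hns, hle⟩
    rcases hs n hns with ⟨hn0, hw⟩
    constructor
    · intro h1
      apply hn0
      have : n.2 = 0 := by omega
      exact Prod.ext h1 this
    · have := habs n.2 n.1 hle
      linarith
  have hhalf2 : ∑ n ∈ s₂, F n ≤ 40 / ρ^2 := by
    have e : ∑ n ∈ s₂.image Prod.swap, F n = ∑ n ∈ s₂, F n.swap :=
      Finset.sum_image (fun x _ y _ h => Prod.swap_injective h)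
    have e2 : ∑ n ∈ s₂, F n.swap = ∑ n ∈ s₂, F n :=
      Finset.sum_congr rfl fun n _ => by
        simp only [hF, Prod.fst_swap, Prod.snd_swap]; ring_nf
    rw [← e2, ← e]
    apply latt_high_half ρ hρ
    intro n hn
    rcases Finset.mem_image.mp hn with ⟨n', hn', rfl⟩
    rcases Finset.mem_filter.mp hn' with ⟨hns, hlt⟩
    rcases hs n' hns with ⟨hn0, hw⟩
    constructor
    · simp only [Prod.fst_swap]
      omega
    · have := habs n'.1 n'.2 (by omega)
      simp only [Prod.fst_swap]
      linarith
  simp only [hF] at hhalf1 hhalf2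
  have e80 : (40:ℝ)/ρ^2 + 40/ρ^2 = 80/ρ^2 := by ring
  linarith

lemma summable_one_div_one_add_sq (c : ℝ) (hc : 0 < c) :
    Summable fun j : ℤ => (1 + c*((j:ℝ))^2)⁻¹ := by
  have hnat : Summable fun n : ℕ => (1 + c*((n:ℝ))^2)⁻¹ := by
    apply (summable_nat_add_iff 1).mp
    have hb0 : Summable fun n : ℕ => (((n:ℕ):ℝ)^2)⁻¹ := by
      have := Real.summable_one_div_nat_pow.mpr (by norm_num : 1 < 2)
      exact this.congr fun n => by rw [one_div]
    have hbase : Summable fun n : ℕ => (((n+1:ℕ):ℝ)^2)⁻¹ :=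
      (summable_nat_add_iff (f := fun n : ℕ => (((n:ℕ):ℝ)^2)⁻¹) 1).mpr hb0
    have : Summable fun n : ℕ => c⁻¹ * (((n+1:ℕ):ℝ)^2)⁻¹ := hbase.mul_left _
    apply Summable.of_nonneg_of_le (fun n => by positivity) _ this
    intro n
    have h1 : (0:ℝ) < ((n+1:ℕ):ℝ)^2 := by positivity
    have h2 : c * ((n+1:ℕ):ℝ)^2 ≤ 1 + c*(((n:ℝ))+1)^2 := by
      push_cast; nlinarith
    rw [← mul_inv]
    apply inv_anti₀ (by positivity)
    push_cast at h2 ⊢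
    linarith
  apply Summable.of_nat_of_neg
  · exact hnat.congr fun n => by norm_num
  · exact hnat.congr fun n => by push_cast; ring_nf

lemma cs_helper {x A B : ℝ} (hx : 0 ≤ x) (hA : 0 ≤ A) (hAB : x^2 ≤ A * B) :
    x ≤ Real.sqrt A * Real.sqrt B := by
  have hABn : 0 ≤ A * B := le_trans (sq_nonneg x) hAB
  rw [← Real.sqrt_mul hA]
  exact (Real.le_sqrt hx hABn).mpr hAB

lemma cs_block (v : ℤ×ℤ → ℂ) (ω : ℤ×ℤ → ℝ) (W : ℝ)
    (hv : ∀ n, v n ≠ 0 → n ≠ 0) (hω : ∀ n, n ≠ 0 → 0 < ω n)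
    (hsumq : Summable fun n => (ω n)^2 * ‖v n‖^2)
    (hwsum : ∀ s : Finset (ℤ×ℤ), (∀ n ∈ s, v n ≠ 0) → ∑ n ∈ s, ((ω n)^2)⁻¹ ≤ W)
    (hA : Summable fun n => ‖v n‖) :
    ∑' n, ‖v n‖ ≤ Real.sqrt W * Real.sqrt (∑' n, (ω n)^2 * ‖v n‖^2) := by
  classical
  have hW : 0 ≤ W := by
    have := hwsum ∅ (by simp)
    simpa using this
  apply Summable.tsum_le_of_sum_le hA
  intro s
  rw [← Finset.sum_filter_ne_zero s (f := fun n => ‖v n‖)]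
  set s' := s.filter (fun n => ‖v n‖ ≠ 0) with hs'
  have hmem : ∀ n ∈ s', v n ≠ 0 := by
    intro n hn
    have h1 : ‖v n‖ ≠ 0 := (Finset.mem_filter.mp hn).2
    exact fun h => h1 (by rw [h, norm_zero])
  have hωpos : ∀ n ∈ s', 0 < ω n := fun n hn => hω n (hv n (hmem n hn))
  have hCS := Finset.sum_mul_sq_le_sq_mul_sq s' (fun n => (ω n)⁻¹) (fun n => ω n * ‖v n‖)
  have heq : ∑ n ∈ s', ‖v n‖ = ∑ n ∈ s', (ω n)⁻¹ * (ω n * ‖v n‖) := by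
    refine Finset.sum_congr rfl fun n hn => ?_
    rw [← mul_assoc, inv_mul_cancel₀ (ne_of_gt (hωpos n hn)), one_mul]
  have hp2 : ∑ n ∈ s', ((ω n)⁻¹)^2 ≤ W := by
    have e : ∀ n, ((ω n)⁻¹)^2 = ((ω n)^2)⁻¹ := fun n => inv_pow (ω n) 2
    calc ∑ n ∈ s', ((ω n)⁻¹)^2 = ∑ n ∈ s', ((ω n)^2)⁻¹ :=
          Finset.sum_congr rfl fun n _ => e n
      _ ≤ W := hwsum s' hmem
  have hq2 : ∑ n ∈ s', (ω n * ‖v n‖)^2 ≤ ∑' n, (ω n)^2 * ‖v n‖^2 := by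
    have e : ∀ n, (ω n * ‖v n‖)^2 = (ω n)^2 * ‖v n‖^2 := fun n => mul_pow _ _ 2
    calc ∑ n ∈ s', (ω n * ‖v n‖)^2 = ∑ n ∈ s', (ω n)^2 * ‖v n‖^2 :=
          Finset.sum_congr rfl fun n _ => e n
      _ ≤ ∑' n, (ω n)^2 * ‖v n‖^2 :=
          Summable.sum_le_tsum s' (fun n _ => mul_nonneg (sq_nonneg _) (sq_nonneg _)) hsumq
  have hfin : (∑ n ∈ s', ‖v n‖)^2 ≤ W * ∑' n, (ω n)^2 * ‖v n‖^2 := by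
    rw [heq]
    calc (∑ n ∈ s', (ω n)⁻¹ * (ω n * ‖v n‖))^2
        ≤ (∑ n ∈ s', ((ω n)⁻¹)^2) * ∑ n ∈ s', (ω n * ‖v n‖)^2 := hCS
      _ ≤ W * ∑' n, (ω n)^2 * ‖v n‖^2 := by
          apply mul_le_mul hp2 hq2 (Finset.sum_nonneg fun n _ => sq_nonneg _) hW
  exact cs_helper (Finset.sum_nonneg fun n _ => norm_nonneg _) hW hfin

lemma exp_norm_one (r : ℝ) : ‖Complex.exp (Complex.I * (r : ℂ))‖ = 1 := by
  rw [Complex.norm_exp]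
  have : (Complex.I * (r : ℂ)).re = 0 := by simp [Complex.mul_re]
  rw [this, Real.exp_zero]

lemma linf_le_tsum (L₁ L₂ : ℝ) (u : ℤ × ℤ → ℂ) (h : Summable fun n => ‖u n‖) :
    linf L₁ L₂ u ≤ ∑' n : ℤ × ℤ, ‖u n‖ := by
  unfold linf
  apply ciSup_le
  intro x
  have he : ∀ n : ℤ × ℤ,
      ‖u n * Complex.exp (Complex.I * ((dotR (wn L₁ L₂ n) x : ℝ) : ℂ))‖ = ‖u n‖ := by
    intro n
    rw [norm_mul, exp_norm_one, mul_one]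
  have hs : Summable fun n : ℤ × ℤ =>
      ‖u n * Complex.exp (Complex.I * ((dotR (wn L₁ L₂ n) x : ℝ) : ℂ))‖ :=
    h.congr fun n => (he n).symm
  calc ‖∑' n : ℤ × ℤ, u n * Complex.exp (Complex.I * ((dotR (wn L₁ L₂ n) x : ℝ) : ℂ))‖
      ≤ ∑' n : ℤ × ℤ, ‖u n * Complex.exp (Complex.I * ((dotR (wn L₁ L₂ n) x : ℝ) : ℂ))‖ :=
        norm_tsum_le_tsum_norm hs
    _ = ∑' n : ℤ × ℤ, ‖u n‖ := tsum_congr he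

end Statement17Helpers

set_option maxHeartbeats 2000000

/-- the high/low frequency splitting in the Appendix.  There is
`c > 0` depending only on `M` such that for every `κ ≥ 2` and every smooth zero-mean
field `u` on `M`, writing `u^<` and `u^>` for the parts with `0 < |k| < κ` and `|k| ≥ κ`:
`‖u‖_{L^∞} ≤ c ‖∇u^<‖ (1 + log κ)^{1/2} + c ‖Δu^>‖/κ`. -/
theorem statement17 (L₁ L₂ : ℝ) (hL₁ : 0 < L₁) (hL₂ : 0 < L₂) :
    ∃ c : ℝ, 0 < c ∧
      ∀ κ : ℝ, 2 ≤ κ →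
        ∀ u : ℤ × ℤ → ℂ, u 0 = 0 → realField u → regular L₁ L₂ u →
          linf L₁ L₂ u
            ≤ c * Real.sqrt (hsq L₁ L₂ 1 fun n =>
                  if Real.sqrt (ksq (wn L₁ L₂ n)) < κ then u n else 0) *
                Real.sqrt (1 + Real.log κ)
              + c * Real.sqrt (hsq L₁ L₂ 2 fun n =>
                  if κ ≤ Real.sqrt (ksq (wn L₁ L₂ n)) then u n else 0) / κ := by
  classical
  have hπ := Real.pi_pos
  set a : ℝ := 2*Real.pi/L₁ with ha
  set b : ℝ := 2*Real.pi/L₂ with hb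
  have ha0 : 0 < a := div_pos (by positivity) hL₁
  have hb0 : 0 < b := div_pos (by positivity) hL₂
  set c₀ : ℝ := min a b with hc₀def
  set C₁ : ℝ := max a b with hC₁def
  have hc₀ : 0 < c₀ := lt_min ha0 hb0
  have hC₁ : 0 < C₁ := lt_of_lt_of_le ha0 (le_max_left _ _)
  set K₁ : ℝ := 24*(1+|Real.log c₀|)/c₀^2 with hK₁def
  set K₂ : ℝ := 80*C₁^2/c₀^4 with hK₂def
  have hK₁nn : 0 ≤ K₁ := by
    rw [hK₁def]; positivity
  have hK₂nn : 0 ≤ K₂ := by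
    rw [hK₂def]; positivity
  set L : ℝ := Real.sqrt (L₁*L₂) with hLdef
  have hL : 0 < L := Real.sqrt_pos.mpr (by positivity)
  refine ⟨(Real.sqrt K₁ + Real.sqrt K₂ + 1)/L, div_pos (by positivity) hL, ?_⟩
  intro κ hκ u hu0 _ hureg
  have hκ0 : (0:ℝ) < κ := by linarith
  have hlogκ : 0 ≤ Real.log κ := Real.log_nonneg (by linarith)
  -- the two pieces
  set lo : ℤ × ℤ → ℂ := fun n => if Real.sqrt (ksq (wn L₁ L₂ n)) < κ then u n else 0 with hlo
  set hi : ℤ × ℤ → ℂ := fun n => if κ ≤ Real.sqrt (ksq (wn L₁ L₂ n)) then u n else 0 with hhi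
  -- basic spectral facts
  have hksq_eq : ∀ n : ℤ × ℤ, ksq (wn L₁ L₂ n) = a^2*((n.1:ℝ))^2 + b^2*((n.2:ℝ))^2 := by
    intro n; simp only [ksq, wn, ha, hb]; ring
  have hksq_nn : ∀ n, 0 ≤ ksq (wn L₁ L₂ n) := fun n => by rw [hksq_eq]; positivity
  have hw_ge : ∀ n : ℤ × ℤ, n ≠ 0 → 1 ≤ ((n.1:ℝ))^2 + ((n.2:ℝ))^2 := by
    intro n hn
    have h1 : n.1 ≠ 0 ∨ n.2 ≠ 0 := by
      by_contra h
      push_neg at h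
      exact hn (Prod.ext h.1 h.2)
    have key : ∀ m : ℤ, m ≠ 0 → (1:ℝ) ≤ ((m:ℝ))^2 := by
      intro m hm
      have h2 : 1 ≤ |m| := Int.one_le_abs (by exact_mod_cast hm)
      have h3 : (1:ℝ) ≤ |(m:ℝ)| := by
        rw [← Int.cast_abs]; exact_mod_cast h2
      nlinarith [abs_nonneg ((m:ℝ)), sq_abs ((m:ℝ))]
    rcases h1 with h | h
    · nlinarith [key n.1 h, sq_nonneg ((n.2:ℝ))]
    · nlinarith [key n.2 h, sq_nonneg ((n.1:ℝ))]
  have hlowb : ∀ n : ℤ × ℤ, c₀^2*(((n.1:ℝ))^2+((n.2:ℝ))^2) ≤ ksq (wn L₁ L₂ n) := by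
    intro n
    rw [hksq_eq]
    have h1 : c₀ ≤ a := min_le_left _ _
    have h2 : c₀ ≤ b := min_le_right _ _
    nlinarith [sq_nonneg ((n.1:ℝ)), sq_nonneg ((n.2:ℝ)), mul_self_le_mul_self hc₀.le h1,
      mul_self_le_mul_self hc₀.le h2]
  have hupb : ∀ n : ℤ × ℤ, ksq (wn L₁ L₂ n) ≤ C₁^2*(((n.1:ℝ))^2+((n.2:ℝ))^2) := by
    intro n
    rw [hksq_eq]
    have h1 : a ≤ C₁ := le_max_left _ _
    have h2 : b ≤ C₁ := le_max_right _ _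
    nlinarith [sq_nonneg ((n.1:ℝ)), sq_nonneg ((n.2:ℝ)), mul_self_le_mul_self ha0.le h1,
      mul_self_le_mul_self hb0.le h2]
  have hksq_pos : ∀ n : ℤ × ℤ, n ≠ 0 → 0 < ksq (wn L₁ L₂ n) := by
    intro n hn
    have := hlowb n
    have := hw_ge n hn
    nlinarith [pow_pos hc₀ 2]
  have hrpow2 : ∀ x : ℝ, x ^ (2:ℝ) = x^(2:ℕ) := fun x => by
    rw [show (2:ℝ) = ((2:ℕ):ℝ) by norm_num, Real.rpow_natCast]
  -- summability facts
  have hreg1 : Summable fun n => (1 + ksq (wn L₁ L₂ n)) * ‖u n‖^2 :=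
    (hureg 1).congr fun n => by rw [Real.rpow_one]
  have hreg2 : Summable fun n => (1 + ksq (wn L₁ L₂ n))^2 * ‖u n‖^2 :=
    (hureg 2).congr fun n => by rw [hrpow2]
  have hP : Summable fun n : ℤ × ℤ => ((1 + ksq (wn L₁ L₂ n))^2)⁻¹ := by
    have h1 := summable_one_div_one_add_sq (a^2) (by positivity)
    have h2 := summable_one_div_one_add_sq (b^2) (by positivity)
    have hprod := Summable.mul_of_nonneg h1 h2 (fun j => by positivity) (fun j => by positivity)
    apply Summable.of_nonneg_of_le (fun n => by positivity) _ hprod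
    intro n
    rw [hksq_eq]
    have hA : (0:ℝ) ≤ a^2*((n.1:ℝ))^2 := by positivity
    have hB : (0:ℝ) ≤ b^2*((n.2:ℝ))^2 := by positivity
    rw [← mul_inv]
    apply inv_anti₀ (by nlinarith)
    nlinarith
  have hle_lo : ∀ n, ‖lo n‖ ≤ ‖u n‖ := by
    intro n
    by_cases h : Real.sqrt (ksq (wn L₁ L₂ n)) < κ
    · simp [hlo, h]
    · simp [hlo, h]
  have hle_hi : ∀ n, ‖hi n‖ ≤ ‖u n‖ := by
    intro n
    by_cases h : κ ≤ Real.sqrt (ksq (wn L₁ L₂ n))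
    · simp [hhi, h]
    · simp [hhi, h]
  have hnu : Summable fun n => ‖u n‖ := by
    apply Summable.of_nonneg_of_le (fun n => norm_nonneg _) _ ((hP.add hreg2).div_const 2)
    intro n
    set t := ksq (wn L₁ L₂ n) with htdef
    have ht : 0 ≤ t := hksq_nn n
    have ht1 : (0:ℝ) < 1 + t := by linarith
    have e1 : ((1+t)⁻¹)^2 = ((1+t)^2)⁻¹ := inv_pow _ 2
    have e2 : (1+t)⁻¹*((1+t)*‖u n‖) = ‖u n‖ := by
      rw [← mul_assoc, inv_mul_cancel₀ (ne_of_gt ht1), one_mul]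
    have e3 : ((1+t)*‖u n‖)^2 = (1+t)^2*‖u n‖^2 := mul_pow _ _ 2
    have h2ab := two_mul_le_add_sq ((1+t)⁻¹) ((1+t)*‖u n‖)
    nlinarith [h2ab, e1, e2, e3]
  have hAlo : Summable fun n => ‖lo n‖ :=
    Summable.of_nonneg_of_le (fun n => norm_nonneg _) hle_lo hnu
  have hAhi : Summable fun n => ‖hi n‖ :=
    Summable.of_nonneg_of_le (fun n => norm_nonneg _) hle_hi hnu
  have hsplit : ∀ n, ‖u n‖ = ‖lo n‖ + ‖hi n‖ := by
    intro n
    by_cases h : Real.sqrt (ksq (wn L₁ L₂ n)) < κ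
    · simp [hlo, hhi, h, not_le.mpr h]
    · simp [hlo, hhi, h, not_lt.mp h]
  -- weighted summability
  have hq1 : Summable fun n => (Real.sqrt (ksq (wn L₁ L₂ n)))^2 * ‖lo n‖^2 := by
    apply Summable.of_nonneg_of_le
      (fun n => mul_nonneg (sq_nonneg _) (sq_nonneg _)) _ hreg1
    intro n
    rw [Real.sq_sqrt (hksq_nn n)]
    have h1 : ‖lo n‖^2 ≤ ‖u n‖^2 := pow_le_pow_left₀ (norm_nonneg _) (hle_lo n) 2
    nlinarith [hksq_nn n, sq_nonneg (‖u n‖)]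
  have hq2 : Summable fun n => (ksq (wn L₁ L₂ n))^2 * ‖hi n‖^2 := by
    apply Summable.of_nonneg_of_le
      (fun n => mul_nonneg (sq_nonneg _) (sq_nonneg _)) _ hreg2
    intro n
    have h1 : ‖hi n‖^2 ≤ ‖u n‖^2 := pow_le_pow_left₀ (norm_nonneg _) (hle_hi n) 2
    have h2 : (ksq (wn L₁ L₂ n))^2 ≤ (1 + ksq (wn L₁ L₂ n))^2 := by
      nlinarith [hksq_nn n]
    nlinarith [hksq_nn n, sq_nonneg (‖u n‖), sq_nonneg (ksq (wn L₁ L₂ n)),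
      sq_nonneg (1 + ksq (wn L₁ L₂ n))]
  -- support facts
  have hv_lo : ∀ n, lo n ≠ 0 → n ≠ 0 := by
    intro n hn h0
    apply hn
    rw [h0]
    simp [hlo, hu0]
  have hv_hi : ∀ n, hi n ≠ 0 → n ≠ 0 := by
    intro n hn h0
    apply hn
    rw [h0]
    simp [hhi, hu0]
  -- weight sums: low
  set R : ℝ := max (κ/c₀) 1 with hRdef
  have hR1 : (1:ℝ) ≤ R := le_max_right _ _
  have hlogR : 1 + Real.log R ≤ (1+|Real.log c₀|)*(1+Real.log κ) := by
    have habs : 0 ≤ |Real.log c₀| := abs_nonneg _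
    have hbound : Real.log R ≤ Real.log κ + |Real.log c₀| := by
      rcases le_or_gt 1 (κ/c₀) with h | h
      · rw [hRdef, max_eq_left h]
        rw [Real.log_div (by linarith) (ne_of_gt hc₀)]
        have := neg_le_abs (Real.log c₀)
        linarith
      · rw [hRdef, max_eq_right h.le, Real.log_one]
        linarith
    nlinarith [mul_nonneg habs hlogκ]
  have hwlow : ∀ s : Finset (ℤ × ℤ), (∀ n ∈ s, lo n ≠ 0) →
      ∑ n ∈ s, ((Real.sqrt (ksq (wn L₁ L₂ n)))^2)⁻¹ ≤ K₁*(1+Real.log κ) := by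
    intro s hsupp
    have hmem : ∀ n ∈ s, n ≠ 0 ∧ ((n.1:ℝ))^2+((n.2:ℝ))^2 < R^2 := by
      intro n hn
      have hn0 : n ≠ 0 := hv_lo n (hsupp n hn)
      refine ⟨hn0, ?_⟩
      have hcond : Real.sqrt (ksq (wn L₁ L₂ n)) < κ := by
        by_contra hc
        exact hsupp n hn (by simp [hlo, hc])
      have h1 : ksq (wn L₁ L₂ n) < κ^2 := by
        have hs := Real.sq_sqrt (hksq_nn n)
        nlinarith [Real.sqrt_nonneg (ksq (wn L₁ L₂ n))]
      have h2 := hlowb n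
      have h3 : κ/c₀ ≤ R := le_max_left _ _
      have h4 : κ^2/c₀^2 ≤ R^2 := by
        have h5 : (κ/c₀)^2 ≤ R^2 := pow_le_pow_left₀ (by positivity) h3 2
        rwa [div_pow] at h5
      have h6 : c₀^2 * (((n.1:ℝ))^2+((n.2:ℝ))^2) < κ^2 := lt_of_le_of_lt h2 h1
      have h7 : ((n.1:ℝ))^2+((n.2:ℝ))^2 < κ^2/c₀^2 := by
        rw [lt_div_iff₀ (pow_pos hc₀ 2)]
        linarith [h6]
      linarith
    have hstep : ∀ n ∈ s, ((Real.sqrt (ksq (wn L₁ L₂ n)))^2)⁻¹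
        ≤ (c₀^2)⁻¹ * ((((n.1:ℝ))^2+((n.2:ℝ))^2))⁻¹ := by
      intro n hn
      rcases hmem n hn with ⟨hn0, _⟩
      have hwpos : (0:ℝ) < ((n.1:ℝ))^2+((n.2:ℝ))^2 := by linarith [hw_ge n hn0]
      rw [Real.sq_sqrt (hksq_nn n), ← mul_inv]
      apply inv_anti₀ (mul_pos (pow_pos hc₀ 2) hwpos)
      exact hlowb n
    calc ∑ n ∈ s, ((Real.sqrt (ksq (wn L₁ L₂ n)))^2)⁻¹
        ≤ ∑ n ∈ s, (c₀^2)⁻¹ * ((((n.1:ℝ))^2+((n.2:ℝ))^2))⁻¹ := Finset.sum_le_sum hstep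
      _ = (c₀^2)⁻¹ * ∑ n ∈ s, ((((n.1:ℝ))^2+((n.2:ℝ))^2))⁻¹ := by rw [Finset.mul_sum]
      _ ≤ (c₀^2)⁻¹ * (24*(1+Real.log R)) := by
          apply mul_le_mul_of_nonneg_left _ (by positivity)
          exact latt_low R hR1 s hmem
      _ ≤ K₁*(1+Real.log κ) := by
          have h7 : (0:ℝ) ≤ (c₀^2)⁻¹ := by positivity
          have h8 := mul_le_mul_of_nonneg_left hlogR h7
          have e : K₁*(1+Real.log κ) = (c₀^2)⁻¹*(24*((1+|Real.log c₀|)*(1+Real.log κ))) := by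
            rw [hK₁def]; field_simp
          rw [e]
          nlinarith [h8]
  -- weight sums: high
  have hwhigh : ∀ s : Finset (ℤ × ℤ), (∀ n ∈ s, hi n ≠ 0) →
      ∑ n ∈ s, ((ksq (wn L₁ L₂ n))^2)⁻¹ ≤ K₂/κ^2 := by
    intro s hsupp
    set ρ : ℝ := κ/C₁ with hρdef
    have hρ : 0 < ρ := div_pos hκ0 hC₁
    have hmem : ∀ n ∈ s, n ≠ 0 ∧ ρ^2 ≤ ((n.1:ℝ))^2+((n.2:ℝ))^2 := by
      intro n hn
      have hn0 : n ≠ 0 := hv_hi n (hsupp n hn)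
      refine ⟨hn0, ?_⟩
      have hcond : κ ≤ Real.sqrt (ksq (wn L₁ L₂ n)) := by
        by_contra hc
        exact hsupp n hn (by simp [hhi, hc])
      have h1 : κ^2 ≤ ksq (wn L₁ L₂ n) := by
        have hs := Real.sq_sqrt (hksq_nn n)
        nlinarith [Real.sqrt_nonneg (ksq (wn L₁ L₂ n))]
      have h2 := hupb n
      rw [hρdef, div_pow, div_le_iff₀ (pow_pos hC₁ 2)]
      nlinarith
    have hstep : ∀ n ∈ s, ((ksq (wn L₁ L₂ n))^2)⁻¹
        ≤ (c₀^4)⁻¹ * (((((n.1:ℝ))^2+((n.2:ℝ))^2))^2)⁻¹ := by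
      intro n hn
      rcases hmem n hn with ⟨hn0, _⟩
      have hwpos : (0:ℝ) < ((n.1:ℝ))^2+((n.2:ℝ))^2 := by linarith [hw_ge n hn0]
      have e : (c₀^4)⁻¹ * (((((n.1:ℝ))^2+((n.2:ℝ))^2))^2)⁻¹
          = ((c₀^2*(((n.1:ℝ))^2+((n.2:ℝ))^2))^2)⁻¹ := by
        rw [mul_pow, ← mul_inv]
        congr 1
        ring
      rw [e]
      apply inv_anti₀ (pow_pos (mul_pos (pow_pos hc₀ 2) hwpos) 2)
      have := hlowb n
      nlinarith [hksq_nn n, mul_pos (pow_pos hc₀ 2) hwpos]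
    calc ∑ n ∈ s, ((ksq (wn L₁ L₂ n))^2)⁻¹
        ≤ ∑ n ∈ s, (c₀^4)⁻¹ * (((((n.1:ℝ))^2+((n.2:ℝ))^2))^2)⁻¹ := Finset.sum_le_sum hstep
      _ = (c₀^4)⁻¹ * ∑ n ∈ s, (((((n.1:ℝ))^2+((n.2:ℝ))^2))^2)⁻¹ := by rw [Finset.mul_sum]
      _ ≤ (c₀^4)⁻¹ * (80/ρ^2) := by
          apply mul_le_mul_of_nonneg_left _ (by positivity)
          exact latt_high ρ hρ s hmem
      _ = K₂/κ^2 := by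
          rw [hK₂def, hρdef]
          field_simp
          try ring
  -- Cauchy–Schwarz
  have hlow_bound := cs_block lo (fun n => Real.sqrt (ksq (wn L₁ L₂ n))) (K₁*(1+Real.log κ))
    hv_lo (fun n hn => Real.sqrt_pos.mpr (hksq_pos n hn)) hq1 hwlow hAlo
  have hhigh_bound := cs_block hi (fun n => ksq (wn L₁ L₂ n)) (K₂/κ^2)
    hv_hi (fun n hn => hksq_pos n hn) hq2 hwhigh hAhi
  -- identify the tsums with hsq
  set T1 : ℝ := ∑' n : ℤ × ℤ, (Real.sqrt (ksq (wn L₁ L₂ n)))^2 * ‖lo n‖^2 with hT1def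
  set T2 : ℝ := ∑' n : ℤ × ℤ, (ksq (wn L₁ L₂ n))^2 * ‖hi n‖^2 with hT2def
  have hT1nn : 0 ≤ T1 := tsum_nonneg fun n => mul_nonneg (sq_nonneg _) (sq_nonneg _)
  have hT2nn : 0 ≤ T2 := tsum_nonneg fun n => mul_nonneg (sq_nonneg _) (sq_nonneg _)
  have hhsq1 : hsq L₁ L₂ 1 lo = (L₁*L₂) * T1 := by
    unfold hsq
    congr 1
    refine tsum_congr fun n => ?_
    rw [Real.rpow_one, Real.sq_sqrt (hksq_nn n)]
  have hhsq2 : hsq L₁ L₂ 2 hi = (L₁*L₂) * T2 := by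
    unfold hsq
    congr 1
    refine tsum_congr fun n => ?_
    rw [hrpow2]
  have hsqrtT1 : Real.sqrt T1 = Real.sqrt (hsq L₁ L₂ 1 lo) / L := by
    rw [hhsq1, hLdef, Real.sqrt_mul (by positivity) T1]
    rw [mul_comm, mul_div_assoc, div_self (ne_of_gt hL), mul_one]
  have hsqrtT2 : Real.sqrt T2 = Real.sqrt (hsq L₁ L₂ 2 hi) / L := by
    rw [hhsq2, hLdef, Real.sqrt_mul (by positivity) T2]
    rw [mul_comm, mul_div_assoc, div_self (ne_of_gt hL), mul_one]
  -- final assembly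
  have h1 : linf L₁ L₂ u ≤ ∑' n : ℤ × ℤ, ‖u n‖ := linf_le_tsum L₁ L₂ u hnu
  have h2 : ∑' n : ℤ × ℤ, ‖u n‖ = (∑' n : ℤ × ℤ, ‖lo n‖) + ∑' n : ℤ × ℤ, ‖hi n‖ := by
    rw [← Summable.tsum_add hAlo hAhi]
    exact tsum_congr hsplit
  have hc : Real.sqrt K₁ / L ≤ (Real.sqrt K₁ + Real.sqrt K₂ + 1)/L :=
    div_le_div_of_nonneg_right (by linarith [Real.sqrt_nonneg K₂]) hL.le
  have hc2 : Real.sqrt K₂ / L ≤ (Real.sqrt K₁ + Real.sqrt K₂ + 1)/L :=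
    div_le_div_of_nonneg_right (by linarith [Real.sqrt_nonneg K₁]) hL.le
  have t1 : Real.sqrt (K₁*(1+Real.log κ)) * Real.sqrt T1
      ≤ ((Real.sqrt K₁ + Real.sqrt K₂ + 1)/L) * Real.sqrt (hsq L₁ L₂ 1 lo)
        * Real.sqrt (1+Real.log κ) := by
    rw [Real.sqrt_mul hK₁nn, hsqrtT1]
    have e : Real.sqrt K₁ * Real.sqrt (1+Real.log κ) * (Real.sqrt (hsq L₁ L₂ 1 lo)/L)
        = (Real.sqrt K₁/L) * (Real.sqrt (hsq L₁ L₂ 1 lo) * Real.sqrt (1+Real.log κ)) := by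
      ring
    have e2 : ((Real.sqrt K₁ + Real.sqrt K₂ + 1)/L) * Real.sqrt (hsq L₁ L₂ 1 lo)
        * Real.sqrt (1+Real.log κ)
        = ((Real.sqrt K₁ + Real.sqrt K₂ + 1)/L)
          * (Real.sqrt (hsq L₁ L₂ 1 lo) * Real.sqrt (1+Real.log κ)) := by
      ring
    rw [e, e2]
    exact mul_le_mul_of_nonneg_right hc
      (mul_nonneg (Real.sqrt_nonneg _) (Real.sqrt_nonneg _))
  have t2 : Real.sqrt (K₂/κ^2) * Real.sqrt T2
      ≤ ((Real.sqrt K₁ + Real.sqrt K₂ + 1)/L) * Real.sqrt (hsq L₁ L₂ 2 hi) / κ := by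
    rw [Real.sqrt_div hK₂nn, Real.sqrt_sq hκ0.le, hsqrtT2]
    have e : Real.sqrt K₂ / κ * (Real.sqrt (hsq L₁ L₂ 2 hi)/L)
        = (Real.sqrt K₂/L) * (Real.sqrt (hsq L₁ L₂ 2 hi) / κ) := by
      ring
    have e2 : ((Real.sqrt K₁ + Real.sqrt K₂ + 1)/L) * Real.sqrt (hsq L₁ L₂ 2 hi) / κ
        = ((Real.sqrt K₁ + Real.sqrt K₂ + 1)/L) * (Real.sqrt (hsq L₁ L₂ 2 hi) / κ) := by
      ring
    rw [e, e2]
    apply mul_le_mul_of_nonneg_right hc2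
    positivity
  calc linf L₁ L₂ u ≤ ∑' n : ℤ × ℤ, ‖u n‖ := h1
    _ = (∑' n : ℤ × ℤ, ‖lo n‖) + ∑' n : ℤ × ℤ, ‖hi n‖ := h2
    _ ≤ ((Real.sqrt K₁ + Real.sqrt K₂ + 1)/L) * Real.sqrt (hsq L₁ L₂ 1 lo)
          * Real.sqrt (1+Real.log κ)
        + ((Real.sqrt K₁ + Real.sqrt K₂ + 1)/L) * Real.sqrt (hsq L₁ L₂ 2 hi) / κ :=
      add_le_add (le_trans hlow_bound t1) (le_trans hhigh_bound t2)
end
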